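/- arXiv:0910.1623 — 3 statements merged into one kernel-verified Lean document; each statement's English description precedes it below -/
import Mathlib

section
/- Let A be an n×m real matrix, T and Δ disjoint subsets of {1,...,m}, N_e = T ∪ Δ, and suppose A_{N_e} has full column rank. Let y ∈ ℝⁿ, γ > 0, and let c be the vector supported on N_e with c_{N_e} = (A_{N_e}' A_{N_e})^{-1} A_{N_e}' y. Let b̃ be the unique minimizer of L(b) = (1/2)‖y − Ab‖₂² + γ‖b_{T^c}‖₁ over vectors supported on N_e. Then there exists g ∈ ℝᵐ with g supported on Δ, g a subgradient of ‖b_{T^c}‖₁ at b̃ (so ‖g_Δ‖_∞ ≤ 1), such that c_{N_e} − b̃_{N_e} = γ (A_{N_e}' A_{N_e})^{-1} g_{N_e}. -/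
open Matrix Finset

noncomputable section

variable {n m : ℕ}

/-- Submatrix of columns of `A` indexed by `S`. -/
def cols (A : Matrix (Fin n) (Fin m) ℝ) (S : Finset (Fin m)) :
    Matrix (Fin n) {j // j ∈ S} ℝ := Matrix.of fun i j => A i j.1

/-- Subvector of `b` on indices in `S`. -/
def subv (b : Fin m → ℝ) (S : Finset (Fin m)) : {j // j ∈ S} → ℝ := fun j => b j.1

/-- `b` is supported on `S`. -/
def suppOn (b : Fin m → ℝ) (S : Finset (Fin m)) : Prop := ∀ j, j ∉ S → b j = 0

def l2v {k : Type*} [Fintype k] (v : k → ℝ) : ℝ := Real.sqrt (∑ i, v i ^ 2)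

def l1v {k : Type*} [Fintype k] (v : k → ℝ) : ℝ := ∑ i, |v i|

def linfv {k : Type*} [Fintype k] (v : k → ℝ) : ℝ := ⨆ i, |v i|

/-- ℓ¹ norm of the subvector of `b` on the complement of `T`. -/
def l1c (b : Fin m → ℝ) (T : Finset (Fin m)) : ℝ := ∑ j ∈ Tᶜ, |b j|

/-- Induced ℓ∞→ℓ∞ operator norm (max absolute row sum). -/
def matInf {k l : Type*} [Fintype k] [Fintype l] (B : Matrix k l ℝ) : ℝ :=
  ⨆ i, ∑ j, |B i j|

/-- Spectral norm (ℓ²→ℓ² operator norm). -/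
def spec {k l : Type*} [Fintype k] [Fintype l] (B : Matrix k l ℝ) : ℝ :=
  sSup ((fun x => l2v (B.mulVec x)) '' {x | l2v x ≤ 1})

/-- The modified-BPDN objective L(b) = (1/2)‖y − Ab‖₂² + γ‖b_{Tᶜ}‖₁. -/
def objL (A : Matrix (Fin n) (Fin m) ℝ) (y : Fin n → ℝ) (γ : ℝ) (T : Finset (Fin m))
    (b : Fin m → ℝ) : ℝ :=
  (1/2) * (∑ i, (y i - A.mulVec b i) ^ 2) + γ * l1c b T

/-- Orthogonal projector M = I − A_T (A_Tᵀ A_T)⁻¹ A_Tᵀ. -/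
def projM (A : Matrix (Fin n) (Fin m) ℝ) (T : Finset (Fin m)) : Matrix (Fin n) (Fin n) ℝ :=
  1 - cols A T * ((cols A T)ᵀ * cols A T)⁻¹ * (cols A T)ᵀ

/-- Least squares coefficients on `S` : (A_Sᵀ A_S)⁻¹ A_Sᵀ y. -/
def lsq (A : Matrix (Fin n) (Fin m) ℝ) (S : Finset (Fin m)) (y : Fin n → ℝ) :
    {j // j ∈ S} → ℝ :=
  ((cols A S)ᵀ * cols A S)⁻¹.mulVec ((cols A S)ᵀ.mulVec y)

/-- Least squares estimate on `S`, as a vector in ℝᵐ supported on `S`. -/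
def lsqFull (A : Matrix (Fin n) (Fin m) ℝ) (S : Finset (Fin m)) (y : Fin n → ℝ) :
    Fin m → ℝ := fun j => if h : j ∈ S then lsq A S y ⟨j, h⟩ else 0

/-- The matrix A_Δᵀ M A_Δ. -/
def schur (A : Matrix (Fin n) (Fin m) ℝ) (T Δ : Finset (Fin m)) :
    Matrix {j // j ∈ Δ} {j // j ∈ Δ} ℝ :=
  (cols A Δ)ᵀ * projM A T * cols A Δ

/-- The matrix (A_Tᵀ A_T)⁻¹ A_Tᵀ A_Δ (A_Δᵀ M A_Δ)⁻¹. -/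
def crossMat (A : Matrix (Fin n) (Fin m) ℝ) (T Δ : Finset (Fin m)) :
    Matrix {j // j ∈ T} {j // j ∈ Δ} ℝ :=
  ((cols A T)ᵀ * cols A T)⁻¹ * ((cols A T)ᵀ * cols A Δ) * (schur A T Δ)⁻¹

/-- The exact-recovery-coefficient quantity ‖(A_Δᵀ M A_Δ)⁻¹ A_Δᵀ M A_ω‖₁. -/
def erc (A : Matrix (Fin n) (Fin m) ℝ) (T Δ : Finset (Fin m)) (ω : Fin m) : ℝ :=
  l1v ((schur A T Δ)⁻¹.mulVec (((cols A Δ)ᵀ * projM A T).mulVec (fun i => A i ω)))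

/-- `δ` is a valid S-restricted isometry constant for `A`. -/
def RIP (A : Matrix (Fin n) (Fin m) ℝ) (S : ℕ) (δ : ℝ) : Prop :=
  0 ≤ δ ∧ ∀ (J : Finset (Fin m)), J.card ≤ S → ∀ x : Fin m → ℝ, suppOn x J →
    (1 - δ) * (∑ i, x i ^ 2) ≤ (∑ i, (A.mulVec x i) ^ 2) ∧
    (∑ i, (A.mulVec x i) ^ 2) ≤ (1 + δ) * (∑ i, x i ^ 2)

/-- `θ` is a valid (S,S')-restricted orthogonality constant for `A`. -/
def ROC (A : Matrix (Fin n) (Fin m) ℝ) (S S' : ℕ) (θ : ℝ) : Prop :=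
  0 ≤ θ ∧ ∀ (J J' : Finset (Fin m)), Disjoint J J' → J.card ≤ S → J'.card ≤ S' →
    ∀ x x' : Fin m → ℝ, suppOn x J → suppOn x' J' →
      |dotProduct (A.mulVec x) (A.mulVec x')| ≤ θ * l2v x * l2v x'

/-- `b` minimizes the modified-BPDN objective over vectors supported on `S`. -/
def IsRestrMin (A : Matrix (Fin n) (Fin m) ℝ) (y : Fin n → ℝ) (γ : ℝ)
    (T S : Finset (Fin m)) (b : Fin m → ℝ) : Prop :=
  suppOn b S ∧ ∀ b', suppOn b' S → objL A y γ T b ≤ objL A y γ T b'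

/-- `g` is a subgradient of `b ↦ ‖b_{Tᶜ}‖₁` at `b`. -/
def IsSubgrad (T : Finset (Fin m)) (b g : Fin m → ℝ) : Prop :=
  (∀ j, j ∈ T → g j = 0) ∧
  ∀ j, j ∉ T → |g j| ≤ 1 ∧ (b j ≠ 0 → g j = Real.sign (b j))

lemma key2 (a k δ : ℝ) (hδ : 0 < δ) (hk : 0 ≤ k)
    (h : ∀ t, 0 < t → t ≤ δ → 0 ≤ a * t + k * t^2) : 0 ≤ a := by
  by_contra hc
  push_neg at hc
  have hkk : (0:ℝ) < k + 1 := by linarith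
  have hq : 0 < -a / (k+1) := div_pos (by linarith) hkk
  set t := min δ (-a/(k+1)) with ht
  have htpos : 0 < t := lt_min hδ hq
  have h1 := h t htpos (min_le_left _ _)
  have h2 : t ≤ -a/(k+1) := min_le_right _ _
  have ha : 0 ≤ a + k * t := by nlinarith [h1]
  have he : -a/(k+1)*(k+1) = -a := div_mul_cancel₀ _ (ne_of_gt hkk)
  nlinarith [mul_le_mul_of_nonneg_left h2 hk]

lemma key1 (a k δ : ℝ) (hδ : 0 < δ) (hk : 0 ≤ k)
    (h : ∀ t, |t| ≤ δ → 0 ≤ a * t + k * t^2) : a = 0 := by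
  have h1 : 0 ≤ a := key2 a k δ hδ hk (fun t ht0 htδ => h t (by rw [abs_of_pos ht0]; exact htδ))
  have h2 : 0 ≤ -a := key2 (-a) k δ hδ hk (fun t ht0 htδ => by
    have := h (-t) (by rw [abs_neg, abs_of_pos ht0]; exact htδ)
    nlinarith)
  linarith

lemma mulVec_suppOn (A : Matrix (Fin n) (Fin m) ℝ) {b : Fin m → ℝ} {S : Finset (Fin m)}
    (hb : suppOn b S) : A.mulVec b = (cols A S).mulVec (subv b S) := by
  funext i
  simp only [mulVec, dotProduct, cols, subv, Matrix.of_apply]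
  rw [show (univ : Finset {j // j ∈ S}) = S.attach from rfl, Finset.sum_attach S (fun j => A i j * b j)]
  rw [← Finset.sum_subset (Finset.subset_univ S)]
  intro x _ hx
  rw [hb x hx, mul_zero]

lemma l1c_single_add (b : Fin m → ℝ) (T : Finset (Fin m)) (j : Fin m) (t : ℝ) :
    l1c (b + Pi.single j t) T = l1c b T + (if j ∈ T then 0 else |b j + t| - |b j|) := by
  have key : l1c (b + Pi.single j t) T - l1c b T
      = ∑ k ∈ Tᶜ, (|b k + (Pi.single j t : Fin m → ℝ) k| - |b k|) := by
    rw [Finset.sum_sub_distrib]; rfl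
  have hz : ∀ k ∈ Tᶜ, k ≠ j → |b k + (Pi.single j t : Fin m → ℝ) k| - |b k| = 0 := by
    intro k _ hk
    simp [Pi.single_apply, hk]
  by_cases hj : j ∈ T
  · have h0 : ∀ k ∈ Tᶜ, |b k + (Pi.single j t : Fin m → ℝ) k| - |b k| = 0 := by
      intro k hk
      exact hz k hk (by rintro rfl; simp [Finset.mem_compl] at hk; exact hk hj)
    simp only [hj, if_true]
    have := key.trans (Finset.sum_eq_zero h0)
    linarith
  · have hjc : j ∈ Tᶜ := Finset.mem_compl.mpr hj
    have h1 : ∑ k ∈ Tᶜ, (|b k + (Pi.single j t : Fin m → ℝ) k| - |b k|) = |b j + t| - |b j| := by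
      rw [Finset.sum_eq_single_of_mem j hjc (fun k hk hkj => hz k hk hkj)]
      simp [Pi.single_apply]
    simp only [hj, if_false]
    rw [h1] at key; linarith

lemma obj_expand (A : Matrix (Fin n) (Fin m) ℝ) (y : Fin n → ℝ) (γ : ℝ) (T : Finset (Fin m))
    (b : Fin m → ℝ) (j : Fin m) (t : ℝ) :
    objL A y γ T (b + Pi.single j t) =
      objL A y γ T b - (∑ i, A i j * (y i - A.mulVec b i)) * t
        + ((1/2) * ∑ i, A i j ^ 2) * t^2
        + γ * (if j ∈ T then 0 else |b j + t| - |b j|) := by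
  have hmv : A.mulVec (b + Pi.single j t) = fun i => A.mulVec b i + A i j * t := by
    rw [Matrix.mulVec_add, Matrix.mulVec_single]; rfl
  simp only [objL, hmv, l1c_single_add]
  have hq : ∀ i, (y i - (A.mulVec b i + A i j * t))^2
      = (y i - A.mulVec b i)^2 - 2 * (A i j * (y i - A.mulVec b i)) * t + A i j ^2 * t^2 := by
    intro i; ring
  simp only [hq, Finset.sum_add_distrib, Finset.sum_sub_distrib, ← Finset.sum_mul,
    ← Finset.mul_sum]
  ring

lemma abs_diff_of_small (b t : ℝ) (hb : b ≠ 0) (ht : |t| ≤ |b|) :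
    |b + t| - |b| = Real.sign b * t := by
  rcases lt_or_gt_of_ne hb with h | h
  · rw [Real.sign_of_neg h]
    rw [abs_of_neg h] at ht
    have : b + t ≤ 0 := by cases abs_le.mp ht; linarith
    rw [abs_of_nonpos this, abs_of_neg h]; ring
  · rw [Real.sign_of_pos h]
    rw [abs_of_pos h] at ht
    have : 0 ≤ b + t := by cases abs_le.mp ht; linarith
    rw [abs_of_nonneg this, abs_of_pos h]; ring

/-- characterization of the restricted minimizer via a subgradient. -/
theorem stmt2 (n m : ℕ) (A : Matrix (Fin n) (Fin m) ℝ) (T Δ : Finset (Fin m))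
    (hdisj : Disjoint T Δ)
    (hrank : IsUnit ((cols A (T ∪ Δ))ᵀ * cols A (T ∪ Δ)))
    (γ : ℝ) (hγ : 0 < γ) (y : Fin n → ℝ) (btil : Fin m → ℝ)
    (hmin : IsRestrMin A y γ T (T ∪ Δ) btil) :
    ∃ g : Fin m → ℝ, suppOn g Δ ∧ IsSubgrad T btil g ∧
      lsq A (T ∪ Δ) y - subv btil (T ∪ Δ) =
        γ • (((cols A (T ∪ Δ))ᵀ * cols A (T ∪ Δ))⁻¹.mulVec (subv g (T ∪ Δ))) := by
  set N := T ∪ Δ with hN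
  set c : Fin m → ℝ := fun j => ∑ i, A i j * (y i - A.mulVec btil i) with hc
  set kq : Fin m → ℝ := fun j => (1/2) * ∑ i, A i j ^ 2 with hkq
  have hkq0 : ∀ j, 0 ≤ kq j := by
    intro j; simp only [hkq]; positivity
  -- first order inequalities
  have hineq : ∀ j ∈ N, ∀ t : ℝ,
      0 ≤ -(c j) * t + kq j * t^2 + γ * (if j ∈ T then 0 else |btil j + t| - |btil j|) := by
    intro j hj t
    have hsupp : suppOn (btil + Pi.single j t) N := by
      intro k hk
      have hkj : k ≠ j := fun h => hk (h ▸ hj)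
      simp [hmin.1 k hk, Pi.single_apply, hkj]
    have h := hmin.2 _ hsupp
    rw [obj_expand] at h
    simp only [hkq, hc]
    linarith
  -- condition on T
  have factT : ∀ j ∈ T, c j = 0 := by
    intro j hj
    have h := key1 (-(c j)) (kq j) 1 one_pos (hkq0 j) (fun t _ => by
      have := hineq j (Finset.mem_union_left _ hj) t
      simp only [hj, if_true, mul_zero, add_zero] at this
      linarith)
    linarith
  have hnotT : ∀ j ∈ Δ, j ∉ T := fun j hj => Finset.disjoint_right.mp hdisj hj
  -- condition on Δ, nonzero coordinates
  have factΔ2 : ∀ j ∈ Δ, btil j ≠ 0 → c j = γ * Real.sign (btil j) := by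
    intro j hj hb
    have hjN := Finset.mem_union_right T hj
    have hT := hnotT j hj
    have habs : 0 < |btil j| := abs_pos.mpr hb
    have h := key1 (γ * Real.sign (btil j) - c j) (kq j) (|btil j|) habs (hkq0 j) (fun t ht => by
      have h1 := hineq j hjN t
      simp only [hT, if_false] at h1
      rw [abs_diff_of_small (btil j) t hb ht] at h1
      nlinarith)
    linarith
  -- condition on Δ, zero coordinates
  have factΔ1 : ∀ j ∈ Δ, btil j = 0 → |c j| ≤ γ := by
    intro j hj hb
    have hjN := Finset.mem_union_right T hj
    have hT := hnotT j hj
    have h1 : 0 ≤ γ - c j := by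
      apply key2 (γ - c j) (kq j) 1 one_pos (hkq0 j)
      intro t ht0 _
      have := hineq j hjN t
      simp only [hT, if_false, hb, zero_add, abs_zero, sub_zero] at this
      rw [abs_of_pos ht0] at this
      nlinarith
    have h2 : 0 ≤ γ + c j := by
      apply key2 (γ + c j) (kq j) 1 one_pos (hkq0 j)
      intro t ht0 _
      have := hineq j hjN (-t)
      simp only [hT, if_false, hb, zero_add, abs_zero, sub_zero] at this
      rw [abs_neg, abs_of_pos ht0] at this
      nlinarith
    rw [abs_le]; constructor <;> linarith
  -- the subgradient
  set g : Fin m → ℝ := fun j => if j ∈ Δ then c j / γ else 0 with hg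
  have hγ0 : γ ≠ 0 := ne_of_gt hγ
  have hgsupp : suppOn g Δ := by
    intro j hj; simp [hg, hj]
  have hsubgrad : IsSubgrad T btil g := by
    constructor
    · intro j hj
      have : j ∉ Δ := Finset.disjoint_left.mp hdisj hj
      simp [hg, this]
    · intro j hjT
      by_cases hj : j ∈ Δ
      · constructor
        · simp only [hg, hj, if_true]
          by_cases hb : btil j = 0
          · rw [abs_div, abs_of_pos hγ, div_le_one hγ]
            exact factΔ1 j hj hb
          · rw [factΔ2 j hj hb, mul_div_cancel_left₀ _ hγ0]
            rcases lt_or_gt_of_ne hb with h | h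
            · rw [Real.sign_of_neg h]; norm_num
            · rw [Real.sign_of_pos h]; norm_num
        · intro hb
          simp only [hg, hj, if_true]
          rw [factΔ2 j hj hb, mul_div_cancel_left₀ _ hγ0]
      · have hbz : btil j = 0 := hmin.1 j (by simp [hN, hjT, hj])
        constructor
        · simp [hg, hj]
        · intro hb; exact absurd hbz hb
  refine ⟨g, hgsupp, hsubgrad, ?_⟩
  -- matrix algebra
  set B := (cols A N)ᵀ * cols A N with hB
  have hdet : IsUnit B.det := (Matrix.isUnit_iff_isUnit_det B).mp hrank
  have hBinv : B⁻¹ * B = 1 := Matrix.nonsing_inv_mul B hdet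
  have hBinv' : B * B⁻¹ = 1 := Matrix.mul_nonsing_inv B hdet
  set w : {j // j ∈ N} → ℝ := lsq A N y - subv btil N with hw
  have claim : B.mulVec w = fun j => c j.1 := by
    funext j
    have h1 : B.mulVec (lsq A N y) = (cols A N)ᵀ.mulVec y := by
      rw [lsq, Matrix.mulVec_mulVec, hBinv', Matrix.one_mulVec]
    have h2 : B.mulVec (subv btil N) = (cols A N)ᵀ.mulVec (A.mulVec btil) := by
      rw [mulVec_suppOn A hmin.1, hB, ← Matrix.mulVec_mulVec]
    rw [hw, Matrix.mulVec_sub, Pi.sub_apply, h1, h2]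
    simp only [mulVec, dotProduct, transpose_apply, cols, Matrix.of_apply, hc]
    rw [← Finset.sum_sub_distrib]
    congr 1; funext i; ring
  have hcg : (fun j : {j // j ∈ N} => c j.1) = γ • subv g N := by
    funext j
    simp only [Pi.smul_apply, smul_eq_mul, subv, hg]
    by_cases hj : j.1 ∈ Δ
    · rw [if_pos hj, mul_div_cancel₀ _ hγ0]
    · have hjT : j.1 ∈ T := by
        have h2 : j.1 ∈ T ∪ Δ := j.2
        rcases Finset.mem_union.mp h2 with h | h
        · exact h
        · exact absurd h hj
      rw [if_neg hj, mul_zero, factT j.1 hjT]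
  have : w = B⁻¹.mulVec (B.mulVec w) := by
    rw [Matrix.mulVec_mulVec, hBinv, Matrix.one_mulVec]
  rw [this, claim, hcg, Matrix.mulVec_smul]
end
end

section
/- Let T, Δ be disjoint index sets with N_e = T ∪ Δ, A an n×m matrix with A_{N_e} of full column rank, M = I − A_T(A_T'A_T)^{-1}A_T', y ∈ ℝⁿ, γ > 0, c the least-squares solution supported on N_e (c_{N_e} = (A_{N_e}'A_{N_e})^{-1}A_{N_e}'y), and b̃ the minimizer of L(b) = (1/2)‖y − Ab‖₂² + γ‖b_{T^c}‖₁ over vectors supported on N_e. Then ‖b̃ − c‖_∞ ≤ γ · max( ‖(A_T'A_T)^{-1}A_T'A_Δ(A_Δ'MA_Δ)^{-1}‖_∞ , ‖(A_Δ'MA_Δ)^{-1}‖_∞ ). -/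
open Matrix Finset

noncomputable section

variable {n m : ℕ}

/-! ### Auxiliary lemmas for `stmt4` -/

section Stmt4Aux

lemma foc_le (q γ r : ℝ) (hq : 0 ≤ q)
    (h : ∀ t : ℝ, 0 ≤ -t*r + t^2*q/2 + γ*|t|) : r ≤ γ := by
  by_contra hc
  push_neg at hc
  have hq1 : (0:ℝ) < q + 1 := by linarith
  have ht : (0:ℝ) < (r - γ)/(q+1) := div_pos (by linarith) hq1
  have h1 := h ((r-γ)/(q+1))
  rw [abs_of_pos ht] at h1
  have h2 : 0 ≤ (-(((r-γ)/(q+1)))*r + ((r-γ)/(q+1))^2*q/2 + γ*((r-γ)/(q+1))) * (q+1)^2 :=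
    mul_nonneg h1 (by positivity)
  have h3 : ((r-γ)/(q+1)) * (q+1) = r - γ := by field_simp
  nlinarith [sq_nonneg (r - γ), mul_pos ht hq1]

lemma foc_abs (q γ r : ℝ) (hq : 0 ≤ q) (hγ : 0 ≤ γ)
    (h : ∀ t : ℝ, 0 ≤ -t*r + t^2*q/2 + γ*|t|) : |r| ≤ γ := by
  refine abs_le.2 ⟨?_, foc_le q γ r hq h⟩
  have := foc_le q γ (-r) hq (fun t => by
    have := h (-t); rw [abs_neg] at this; nlinarith [this])
  linarith

lemma foc_zero (q r : ℝ) (hq : 0 ≤ q)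
    (h : ∀ t : ℝ, 0 ≤ -t*r + t^2*q/2) : r = 0 := by
  by_contra hne
  have habs : ∀ ε : ℝ, 0 < ε → |r| ≤ ε := by
    intro ε hε
    refine foc_abs q ε r hq hε.le (fun t => ?_)
    have := h t
    nlinarith [abs_nonneg t, mul_nonneg hε.le (abs_nonneg t)]
  have h1 := habs (|r|/2) (by positivity)
  have h2 : 0 < |r| := abs_pos.2 hne
  linarith

variable (A : Matrix (Fin n) (Fin m) ℝ) (T Δ : Finset (Fin m))

/-- Glue a `T`-vector and a `Δ`-vector into a function on `Fin m`. -/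
def glue' (p : {j // j ∈ T} → ℝ) (q : {j // j ∈ Δ} → ℝ) : Fin m → ℝ :=
  fun k => if h : k ∈ T then p ⟨k, h⟩ else if h2 : k ∈ Δ then q ⟨k, h2⟩ else 0

lemma sum_union_split (hdisj : Disjoint T Δ) (F : Fin m → ℝ) :
    ∑ k : {j // j ∈ T ∪ Δ}, F k.1 =
      (∑ k : {j // j ∈ T}, F k.1) + ∑ k : {j // j ∈ Δ}, F k.1 := by
  rw [Finset.sum_coe_sort, Finset.sum_coe_sort, Finset.sum_coe_sort, Finset.sum_union hdisj]

lemma gram_mulVec_apply (S1 S2 : Finset (Fin m)) (v : {k // k ∈ S2} → ℝ) (j : Fin m)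
    (hj : j ∈ S1) :
    (((cols A S1)ᵀ * cols A S2).mulVec v) ⟨j, hj⟩ =
      ∑ k : {k // k ∈ S2}, (∑ i, A i j * A i k.1) * v k := by
  simp [Matrix.mulVec, dotProduct, Matrix.mul_apply, cols, Finset.sum_mul]

lemma raw_as_col (S2 : Finset (Fin m)) (v : {k // k ∈ S2} → ℝ) (j : Fin m) :
    ∑ k : {k // k ∈ S2}, (∑ i, A i j * A i k.1) * v k =
      ∑ i, A i j * ((cols A S2).mulVec v) i := by
  simp only [Matrix.mulVec, dotProduct, Finset.mul_sum, Finset.sum_mul, cols,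
    Matrix.of_apply, mul_assoc]
  exact Finset.sum_comm

lemma mulVec_glue_row (hdisj : Disjoint T Δ) (p : {j // j ∈ T} → ℝ) (q : {j // j ∈ Δ} → ℝ)
    (j : Fin m) (hj : j ∈ T ∪ Δ) :
    (((cols A (T ∪ Δ))ᵀ * cols A (T ∪ Δ)).mulVec (fun k => glue' T Δ p q k.1)) ⟨j, hj⟩ =
      (∑ k : {k // k ∈ T}, (∑ i, A i j * A i k.1) * p k) +
        ∑ k : {k // k ∈ Δ}, (∑ i, A i j * A i k.1) * q k := by
  rw [gram_mulVec_apply A (T ∪ Δ) (T ∪ Δ) _ j hj,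
    sum_union_split T Δ hdisj (fun k => (∑ i, A i j * A i k) * glue' T Δ p q k)]
  congr 1
  · refine Finset.sum_congr rfl fun k _ => ?_
    have : glue' T Δ p q k.1 = p k := by simp [glue', k.2]
    rw [this]
  · refine Finset.sum_congr rfl fun k _ => ?_
    have hkT : k.1 ∉ T := fun h => (Finset.disjoint_left.1 hdisj h) k.2
    have : glue' T Δ p q k.1 = q k := by simp [glue', hkT, k.2]
    rw [this]

lemma schur_eq :
    schur A T Δ = (cols A Δ)ᵀ * cols A Δ -
      ((cols A Δ)ᵀ * cols A T) * ((cols A T)ᵀ * cols A T)⁻¹ * ((cols A T)ᵀ * cols A Δ) := by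
  unfold schur projM
  simp only [Matrix.mul_sub, Matrix.sub_mul, Matrix.mul_one, Matrix.mul_assoc]

lemma ker_to_isUnit {k : Type*} [Fintype k] [DecidableEq k] {M : Matrix k k ℝ}
    (h : ∀ x : k → ℝ, M.mulVec x = 0 → x = 0) : IsUnit M := by
  refine Matrix.mulVec_injective_iff_isUnit.mp fun a b hab => ?_
  have := h (a - b) (by rw [Matrix.mulVec_sub, hab, sub_self])
  exact sub_eq_zero.mp this

lemma mulVec_isUnit_injective {k : Type*} [Fintype k] [DecidableEq k] {M : Matrix k k ℝ}
    (h : IsUnit M) : Function.Injective M.mulVec :=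
  Matrix.mulVec_injective_iff_isUnit.mpr h

lemma isUnit_GTT (hdisj : Disjoint T Δ)
    (hrank : IsUnit ((cols A (T ∪ Δ))ᵀ * cols A (T ∪ Δ))) :
    IsUnit ((cols A T)ᵀ * cols A T) := by
  refine ker_to_isUnit fun x hx => ?_
  have hATx : (cols A T).mulVec x = 0 := by
    have h0 : dotProduct ((cols A T).mulVec x) ((cols A T).mulVec x) = 0 := by
      have h1 : dotProduct x (((cols A T)ᵀ * cols A T).mulVec x) = 0 := by
        rw [hx]; simp
      rwa [← Matrix.mulVec_mulVec, Matrix.dotProduct_mulVec, Matrix.vecMul_transpose] at h1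
    exact dotProduct_self_eq_zero.mp h0
  set xh : {j // j ∈ T ∪ Δ} → ℝ := fun k => glue' T Δ x 0 k.1 with hxh
  have hGxh : ((cols A (T ∪ Δ))ᵀ * cols A (T ∪ Δ)).mulVec xh = 0 := by
    funext j
    obtain ⟨j, hj⟩ := j
    rw [show (0 : {j // j ∈ T ∪ Δ} → ℝ) ⟨j, hj⟩ = 0 from rfl]
    rw [mulVec_glue_row A T Δ hdisj x 0 j hj, raw_as_col A T x j, raw_as_col A Δ 0 j, hATx]
    simp
  have := mulVec_isUnit_injective hrank (a₁ := xh) (a₂ := 0)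
    (by rw [hGxh, Matrix.mulVec_zero])
  funext k
  have h2 := congrFun this ⟨k.1, Finset.mem_union_left _ k.2⟩
  simpa [hxh, glue', k.2] using h2

lemma isUnit_schur (hdisj : Disjoint T Δ)
    (hrank : IsUnit ((cols A (T ∪ Δ))ᵀ * cols A (T ∪ Δ))) :
    IsUnit (schur A T Δ) := by
  have hGTT := isUnit_GTT A T Δ hdisj hrank
  have hGTTd : IsUnit ((cols A T)ᵀ * cols A T).det := (Matrix.isUnit_iff_isUnit_det _).mp hGTT
  refine ker_to_isUnit fun x hx => ?_
  set z : {j // j ∈ T} → ℝ :=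
    (-(((cols A T)ᵀ * cols A T)⁻¹ * ((cols A T)ᵀ * cols A Δ))).mulVec x with hz
  set xh : {j // j ∈ T ∪ Δ} → ℝ := fun k => glue' T Δ z x k.1 with hxh
  have hGxh : ((cols A (T ∪ Δ))ᵀ * cols A (T ∪ Δ)).mulVec xh = 0 := by
    funext j
    obtain ⟨j, hj⟩ := j
    rw [show (0 : {j // j ∈ T ∪ Δ} → ℝ) ⟨j, hj⟩ = 0 from rfl]
    rw [mulVec_glue_row A T Δ hdisj z x j hj]
    rcases Finset.mem_union.1 hj with hjT | hjD
    · rw [← gram_mulVec_apply A T T z j hjT, ← gram_mulVec_apply A T Δ x j hjT]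
      have : ((cols A T)ᵀ * cols A T).mulVec z = -(((cols A T)ᵀ * cols A Δ).mulVec x) := by
        rw [hz, Matrix.mulVec_mulVec, Matrix.mul_neg, ← Matrix.mul_assoc,
          Matrix.mul_nonsing_inv _ hGTTd, Matrix.one_mul, Matrix.neg_mulVec]
      rw [this]; simp
    · rw [← gram_mulVec_apply A Δ T z j hjD, ← gram_mulVec_apply A Δ Δ x j hjD]
      have : ((cols A Δ)ᵀ * cols A T).mulVec z =
          (schur A T Δ).mulVec x - ((cols A Δ)ᵀ * cols A Δ).mulVec x := by
        rw [hz, Matrix.mulVec_mulVec, Matrix.mul_neg, schur_eq, Matrix.sub_mulVec,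
          Matrix.neg_mulVec]
        simp only [Matrix.mul_assoc]
        abel
      rw [this, hx]; simp
  have := mulVec_isUnit_injective hrank (a₁ := xh) (a₂ := 0)
    (by rw [hGxh, Matrix.mulVec_zero])
  funext k
  have hkT : k.1 ∉ T := fun h => (Finset.disjoint_left.1 hdisj h) k.2
  have h2 := congrFun this ⟨k.1, Finset.mem_union_right _ k.2⟩
  simpa [hxh, glue', hkT, k.2] using h2

end Stmt4Aux

/-- ℓ∞ bound on the error between the restricted minimizer and the
least-squares estimate. -/
theorem stmt4 (n m : ℕ) (A : Matrix (Fin n) (Fin m) ℝ) (T Δ : Finset (Fin m))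
    (hdisj : Disjoint T Δ)
    (hrank : IsUnit ((cols A (T ∪ Δ))ᵀ * cols A (T ∪ Δ)))
    (γ : ℝ) (hγ : 0 < γ) (y : Fin n → ℝ) (btil : Fin m → ℝ)
    (hmin : IsRestrMin A y γ T (T ∪ Δ) btil) :
    linfv (btil - lsqFull A (T ∪ Δ) y) ≤
      γ * max (matInf (crossMat A T Δ)) (matInf ((schur A T Δ)⁻¹)) := by
  obtain ⟨hsupp, hopt⟩ := hmin
  have hGd : IsUnit ((cols A (T ∪ Δ))ᵀ * cols A (T ∪ Δ)).det :=
    (Matrix.isUnit_iff_isUnit_det _).mp hrank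
  have hGTT := isUnit_GTT A T Δ hdisj hrank
  have hGTTd : IsUnit ((cols A T)ᵀ * cols A T).det := (Matrix.isUnit_iff_isUnit_det _).mp hGTT
  have hSu := isUnit_schur A T Δ hdisj hrank
  have hSd : IsUnit (schur A T Δ).det := (Matrix.isUnit_iff_isUnit_det _).mp hSu
  set rv : Fin m → ℝ := fun j => ∑ i, A i j * (y i - A.mulVec btil i) with hrv
  set qv : Fin m → ℝ := fun j => ∑ i, (A i j)^2 with hqv
  have hqv0 : ∀ j, 0 ≤ qv j := fun j => Finset.sum_nonneg fun i _ => sq_nonneg _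
  -- perturbation inequality
  have hpert : ∀ j, j ∈ T ∪ Δ → ∀ t : ℝ,
      0 ≤ -t * rv j + t^2 * qv j / 2 +
        γ * (l1c (fun k => btil k + if k = j then t else 0) T - l1c btil T) := by
    intro j hj t
    have hsupp' : suppOn (fun k => btil k + if k = j then t else 0) (T ∪ Δ) := by
      intro k hk
      show btil k + (if k = j then t else 0) = 0
      rw [hsupp k hk, if_neg (fun h : k = j => hk (by rw [h]; exact hj)), add_zero]
    have hle := hopt _ hsupp'
    have hmv : ∀ i, A.mulVec (fun k => btil k + if k = j then t else 0) i
        = A.mulVec btil i + t * A i j := by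
      intro i
      simp only [Matrix.mulVec, dotProduct, mul_add, Finset.sum_add_distrib, mul_ite, mul_zero,
        Finset.sum_ite_eq', Finset.mem_univ, if_true]
      ring
    have hquad : ∑ i, (y i - A.mulVec (fun k => btil k + if k = j then t else 0) i)^2
        = (∑ i, (y i - A.mulVec btil i)^2) - 2*t*rv j + t^2 * qv j := by
      have hpt : ∀ i, (y i - A.mulVec (fun k => btil k + if k = j then t else 0) i)^2
          = (y i - A.mulVec btil i)^2 - 2*t*(A i j * (y i - A.mulVec btil i))
            + t^2*(A i j)^2 := fun i => by rw [hmv]; ring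
      calc ∑ i, (y i - A.mulVec (fun k => btil k + if k = j then t else 0) i)^2
          = ∑ i, ((y i - A.mulVec btil i)^2 - 2*t*(A i j * (y i - A.mulVec btil i))
              + t^2*(A i j)^2) := Finset.sum_congr rfl fun i _ => hpt i
        _ = (∑ i, (y i - A.mulVec btil i)^2) - 2*t*rv j + t^2 * qv j := by
            rw [Finset.sum_add_distrib, Finset.sum_sub_distrib, ← Finset.mul_sum,
              ← Finset.mul_sum]
    rw [objL, objL, hquad] at hle
    linarith
  -- first-order conditions
  have hrT : ∀ j, j ∈ T → rv j = 0 := by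
    intro j hjT
    refine foc_zero (qv j) (rv j) (hqv0 j) fun t => ?_
    have hp := hpert j (Finset.mem_union_left _ hjT) t
    have hl1 : l1c (fun k => btil k + if k = j then t else 0) T = l1c btil T := by
      refine Finset.sum_congr rfl fun k hk => ?_
      show |btil k + (if k = j then t else 0)| = |btil k|
      have hkj : k ≠ j := fun h => (Finset.mem_compl.1 hk) (h ▸ hjT)
      rw [if_neg hkj, add_zero]
    rw [hl1, sub_self, mul_zero, add_zero] at hp
    exact hp
  have hrD : ∀ j, j ∈ Δ → |rv j| ≤ γ := by
    intro j hjD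
    have hjT : j ∉ T := fun h => (Finset.disjoint_left.1 hdisj h) hjD
    refine foc_abs (qv j) γ (rv j) (hqv0 j) hγ.le fun t => ?_
    have hp := hpert j (Finset.mem_union_right _ hjD) t
    have hl1 : l1c (fun k => btil k + if k = j then t else 0) T - l1c btil T ≤ |t| := by
      rw [l1c, l1c, ← Finset.sum_sub_distrib]
      have hbd : ∀ k ∈ Tᶜ, |btil k + if k = j then t else 0| - |btil k|
          ≤ if k = j then |t| else 0 := by
        intro k _
        by_cases hkj : k = j
        · subst hkj
          simp only [if_pos rfl]
          have := abs_sub_abs_le_abs_sub (btil k + t) (btil k)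
          simpa using this
        · simp [hkj]
      calc ∑ k ∈ Tᶜ, (|btil k + if k = j then t else 0| - |btil k|)
          ≤ ∑ k ∈ Tᶜ, (if k = j then |t| else 0) := Finset.sum_le_sum hbd
        _ = |t| := by
            rw [Finset.sum_ite_eq' Tᶜ j (fun _ => |t|), if_pos (Finset.mem_compl.2 hjT)]
    nlinarith [mul_le_mul_of_nonneg_left hl1 hγ.le]
  -- linear algebra: identify the error vector
  set sv : {j // j ∈ Δ} → ℝ := fun k => rv k.1 with hsv
  set Cs : {j // j ∈ T} → ℝ := (crossMat A T Δ).mulVec sv with hCs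
  set Ds : {j // j ∈ Δ} → ℝ := ((schur A T Δ)⁻¹).mulVec sv with hDs
  set w : {j // j ∈ T ∪ Δ} → ℝ := fun k => glue' T Δ Cs (-Ds) k.1 with hw
  set u : {j // j ∈ T ∪ Δ} → ℝ := fun k => btil k.1 - lsq A (T ∪ Δ) y k with hu
  have hGu : ∀ (j : Fin m) (hj : j ∈ T ∪ Δ),
      (((cols A (T ∪ Δ))ᵀ * cols A (T ∪ Δ)).mulVec u) ⟨j, hj⟩ = -rv j := by
    intro j hj
    have husub : u = (fun k : {j // j ∈ T ∪ Δ} => btil k.1) - lsq A (T ∪ Δ) y := rfl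
    rw [husub, Matrix.mulVec_sub]
    have h1 : (((cols A (T ∪ Δ))ᵀ * cols A (T ∪ Δ)).mulVec
        (fun k : {j // j ∈ T ∪ Δ} => btil k.1)) ⟨j, hj⟩ = ∑ i, A i j * A.mulVec btil i := by
      rw [gram_mulVec_apply A (T ∪ Δ) (T ∪ Δ) _ j hj, raw_as_col]
      have : (cols A (T ∪ Δ)).mulVec (fun k : {j // j ∈ T ∪ Δ} => btil k.1)
          = A.mulVec btil := by
        funext i
        show ∑ k : {j // j ∈ T ∪ Δ}, cols A (T ∪ Δ) i k * btil k.1 = _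
        rw [show (fun k : {j // j ∈ T ∪ Δ} => cols A (T ∪ Δ) i k * btil k.1)
            = fun k : {j // j ∈ T ∪ Δ} => A i k.1 * btil k.1 from rfl,
          Finset.sum_coe_sort (T ∪ Δ) (fun k => A i k * btil k)]
        exact Finset.sum_subset (Finset.subset_univ _)
          (fun x _ hx => by rw [hsupp x hx, mul_zero])
      rw [this]
    have h2 : ((cols A (T ∪ Δ))ᵀ * cols A (T ∪ Δ)).mulVec (lsq A (T ∪ Δ) y)
        = (cols A (T ∪ Δ))ᵀ.mulVec y := by
      rw [lsq, Matrix.mulVec_mulVec, Matrix.mul_nonsing_inv _ hGd, Matrix.one_mulVec]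
    rw [Pi.sub_apply, h1, h2]
    have h3 : ((cols A (T ∪ Δ))ᵀ.mulVec y) ⟨j, hj⟩ = ∑ i, A i j * y i := by
      simp [Matrix.mulVec, dotProduct, cols]
    rw [h3]
    have h4 : rv j = (∑ i, A i j * y i) - ∑ i, A i j * A.mulVec btil i := by
      rw [hrv, ← Finset.sum_sub_distrib]
      exact Finset.sum_congr rfl fun i _ => by ring
    linarith
  have hGw : ∀ (j : Fin m) (hj : j ∈ T ∪ Δ),
      (((cols A (T ∪ Δ))ᵀ * cols A (T ∪ Δ)).mulVec w) ⟨j, hj⟩ = -rv j := by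
    intro j hj
    rw [hw, mulVec_glue_row A T Δ hdisj Cs (-Ds) j hj]
    rcases Finset.mem_union.1 hj with hjT | hjD
    · rw [← gram_mulVec_apply A T T Cs j hjT, ← gram_mulVec_apply A T Δ (-Ds) j hjT]
      have h1 : ((cols A T)ᵀ * cols A T).mulVec Cs = ((cols A T)ᵀ * cols A Δ).mulVec Ds := by
        rw [hCs, hDs, Matrix.mulVec_mulVec, Matrix.mulVec_mulVec]
        congr 1
        rw [crossMat]
        simp only [← Matrix.mul_assoc]
        rw [Matrix.mul_nonsing_inv _ hGTTd, Matrix.one_mul]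
      rw [h1, Matrix.mulVec_neg, hrT j hjT, neg_zero]
      simp
    · rw [← gram_mulVec_apply A Δ T Cs j hjD, ← gram_mulVec_apply A Δ Δ (-Ds) j hjD]
      have hkey : ((cols A Δ)ᵀ * cols A T) * crossMat A T Δ
          = ((cols A Δ)ᵀ * cols A Δ) * (schur A T Δ)⁻¹ - 1 := by
        have e0 : (cols A Δ)ᵀ * cols A Δ - schur A T Δ
            = ((cols A Δ)ᵀ * cols A T) * ((cols A T)ᵀ * cols A T)⁻¹
              * ((cols A T)ᵀ * cols A Δ) := by
          rw [schur_eq]; exact (sub_sub_cancel _ _)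
        rw [show ((cols A Δ)ᵀ * cols A Δ) * (schur A T Δ)⁻¹ - 1
            = ((cols A Δ)ᵀ * cols A Δ - schur A T Δ) * (schur A T Δ)⁻¹ from by
          rw [Matrix.sub_mul, Matrix.mul_nonsing_inv _ hSd], e0, crossMat]
        simp only [Matrix.mul_assoc]
      have h2 : ((cols A Δ)ᵀ * cols A T).mulVec Cs
          = ((cols A Δ)ᵀ * cols A Δ).mulVec Ds - sv := by
        rw [hCs, hDs, Matrix.mulVec_mulVec, Matrix.mulVec_mulVec, hkey,
          Matrix.sub_mulVec, Matrix.one_mulVec]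
      rw [h2, Matrix.mulVec_neg]
      have hsj : sv ⟨j, hjD⟩ = rv j := rfl
      simp only [Pi.sub_apply, Pi.neg_apply, hsj]
      ring
  have huw : u = w := by
    apply mulVec_isUnit_injective hrank
    funext k
    obtain ⟨j, hj⟩ := k
    rw [hGu j hj, hGw j hj]
  -- final bound
  have hM1 : 0 ≤ matInf (crossMat A T Δ) :=
    Real.iSup_nonneg fun i => Finset.sum_nonneg fun k _ => abs_nonneg _
  have hRHS0 : 0 ≤ γ * max (matInf (crossMat A T Δ)) (matInf ((schur A T Δ)⁻¹)) :=
    mul_nonneg hγ.le (le_trans hM1 (le_max_left _ _))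
  rw [linfv]
  refine Real.iSup_le (fun j => ?_) hRHS0
  rw [Pi.sub_apply]
  by_cases hj : j ∈ T ∪ Δ
  · have hval : btil j - lsqFull A (T ∪ Δ) y j = w ⟨j, hj⟩ := by
      rw [← huw, hu, lsqFull, dif_pos hj]
    rw [hval, hw]
    show |glue' T Δ Cs (-Ds) j| ≤
      γ * max (matInf (crossMat A T Δ)) (matInf ((schur A T Δ)⁻¹))
    rcases Finset.mem_union.1 hj with hjT | hjD
    · have hgl : glue' T Δ Cs (-Ds) j = Cs ⟨j, hjT⟩ := by simp [glue', hjT]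
      rw [hgl, hCs]
      have hrow : ∀ k : {j // j ∈ Δ}, |crossMat A T Δ ⟨j, hjT⟩ k * sv k|
          ≤ |crossMat A T Δ ⟨j, hjT⟩ k| * γ := fun k => by
        rw [abs_mul]
        exact mul_le_mul_of_nonneg_left (hrD k.1 k.2) (abs_nonneg _)
      calc |((crossMat A T Δ).mulVec sv) ⟨j, hjT⟩|
          ≤ ∑ k : {j // j ∈ Δ}, |crossMat A T Δ ⟨j, hjT⟩ k * sv k| :=
            Finset.abs_sum_le_sum_abs _ _
        _ ≤ ∑ k : {j // j ∈ Δ}, |crossMat A T Δ ⟨j, hjT⟩ k| * γ :=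
            Finset.sum_le_sum fun k _ => hrow k
        _ = (∑ k : {j // j ∈ Δ}, |crossMat A T Δ ⟨j, hjT⟩ k|) * γ :=
            (Finset.sum_mul _ _ _).symm
        _ ≤ matInf (crossMat A T Δ) * γ :=
            mul_le_mul_of_nonneg_right (by
              rw [matInf]
              exact le_ciSup (f := fun i : {j // j ∈ T} =>
                  ∑ k : {j // j ∈ Δ}, |crossMat A T Δ i k|)
                (Set.Finite.bddAbove (Set.finite_range _)) ⟨j, hjT⟩) hγ.le
        _ ≤ max (matInf (crossMat A T Δ)) (matInf ((schur A T Δ)⁻¹)) * γ :=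
            mul_le_mul_of_nonneg_right (le_max_left _ _) hγ.le
        _ = γ * max (matInf (crossMat A T Δ)) (matInf ((schur A T Δ)⁻¹)) := mul_comm _ _
    · have hjT : j ∉ T := fun h => (Finset.disjoint_left.1 hdisj h) hjD
      have hgl : glue' T Δ Cs (-Ds) j = -Ds ⟨j, hjD⟩ := by simp [glue', hjT, hjD]
      rw [hgl, abs_neg, hDs]
      have hrow : ∀ k : {j // j ∈ Δ}, |(schur A T Δ)⁻¹ ⟨j, hjD⟩ k * sv k|
          ≤ |(schur A T Δ)⁻¹ ⟨j, hjD⟩ k| * γ := fun k => by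
        rw [abs_mul]
        exact mul_le_mul_of_nonneg_left (hrD k.1 k.2) (abs_nonneg _)
      calc |(((schur A T Δ)⁻¹).mulVec sv) ⟨j, hjD⟩|
          ≤ ∑ k : {j // j ∈ Δ}, |(schur A T Δ)⁻¹ ⟨j, hjD⟩ k * sv k| :=
            Finset.abs_sum_le_sum_abs _ _
        _ ≤ ∑ k : {j // j ∈ Δ}, |(schur A T Δ)⁻¹ ⟨j, hjD⟩ k| * γ :=
            Finset.sum_le_sum fun k _ => hrow k
        _ = (∑ k : {j // j ∈ Δ}, |(schur A T Δ)⁻¹ ⟨j, hjD⟩ k|) * γ :=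
            (Finset.sum_mul _ _ _).symm
        _ ≤ matInf ((schur A T Δ)⁻¹) * γ :=
            mul_le_mul_of_nonneg_right (by
              rw [matInf]
              exact le_ciSup (f := fun i : {j // j ∈ Δ} =>
                  ∑ k : {j // j ∈ Δ}, |(schur A T Δ)⁻¹ i k|)
                (Set.Finite.bddAbove (Set.finite_range _)) ⟨j, hjD⟩) hγ.le
        _ ≤ max (matInf (crossMat A T Δ)) (matInf ((schur A T Δ)⁻¹)) * γ :=
            mul_le_mul_of_nonneg_right (le_max_right _ _) hγ.le
        _ = γ * max (matInf (crossMat A T Δ)) (matInf ((schur A T Δ)⁻¹)) := mul_comm _ _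
  · rw [hsupp j hj, lsqFull, dif_neg hj, sub_zero, abs_zero]
    exact hRHS0
end
end

section
/- Under the same setup (T, Δ disjoint, N_e = T∪Δ, A_{N_e} full column rank, M = I − A_T(A_T'A_T)^{-1}A_T', c the least-squares estimate on N_e, b̃ the minimizer of L over vectors supported on N_e), the ℓ² error satisfies ‖b̃ − c‖₂ ≤ γ √|Δ| · √( ‖(A_T'A_T)^{-1}A_T'A_Δ(A_Δ'MA_Δ)^{-1}‖₂² + ‖(A_Δ'MA_Δ)^{-1}‖₂² ). -/
open Matrix Finset

noncomputable section

variable {n m : ℕ}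

lemma st5_l2v_nonneg {k : Type*} [Fintype k] (v : k → ℝ) : 0 ≤ l2v v := Real.sqrt_nonneg _

lemma st5_l2v_sq {k : Type*} [Fintype k] (v : k → ℝ) : l2v v ^ 2 = ∑ i, v i ^ 2 := by
  rw [l2v, Real.sq_sqrt (by positivity)]

lemma st5_l2v_eq_zero {k : Type*} [Fintype k] {v : k → ℝ} (h : l2v v = 0) : v = 0 := by
  have : ∑ i, v i ^ 2 = 0 := by
    have := st5_l2v_sq v; rw [h] at this; linarith
  funext i
  have := (Finset.sum_eq_zero_iff_of_nonneg (fun i _ => by positivity)).1 this i (mem_univ i)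
  exact pow_eq_zero_iff (by norm_num) |>.1 this

lemma st5_l2v_smul {k : Type*} [Fintype k] (c : ℝ) (v : k → ℝ) : l2v (c • v) = |c| * l2v v := by
  simp only [l2v, Pi.smul_apply, smul_eq_mul, mul_pow, ← Finset.mul_sum]
  rw [Real.sqrt_mul (by positivity), Real.sqrt_sq_eq_abs]

lemma st5_l2v_neg {k : Type*} [Fintype k] (v : k → ℝ) : l2v (-v) = l2v v := by
  simp [l2v]

lemma st5_spec_bddAbove {k l : Type*} [Fintype k] [Fintype l] (B : Matrix k l ℝ) :
    BddAbove ((fun x => l2v (B.mulVec x)) '' {x | l2v x ≤ 1}) := by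
  refine ⟨Real.sqrt (∑ i, ∑ j, B i j ^ 2), ?_⟩
  rintro _ ⟨x, hx, rfl⟩
  simp only [l2v]
  apply Real.sqrt_le_sqrt
  apply Finset.sum_le_sum
  intro i _
  have hcs := Finset.sum_mul_sq_le_sq_mul_sq Finset.univ (fun j => B i j) x
  have hx2 : ∑ j, x j ^ 2 ≤ 1 := by
    have := st5_l2v_sq x
    have hx1 : l2v x ≤ 1 := hx
    nlinarith [st5_l2v_nonneg x]
  calc B.mulVec x i ^ 2 = (∑ j, B i j * x j) ^ 2 := rfl
    _ ≤ (∑ j, B i j ^ 2) * ∑ j, x j ^ 2 := hcs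
    _ ≤ (∑ j, B i j ^ 2) * 1 := by
        apply mul_le_mul_of_nonneg_left hx2 (by positivity)
    _ = ∑ j, B i j ^ 2 := mul_one _

lemma st5_spec_nonneg {k l : Type*} [Fintype k] [Fintype l] (B : Matrix k l ℝ) : 0 ≤ spec B := by
  have h0 : (0:ℝ) ∈ (fun x => l2v (B.mulVec x)) '' {x | l2v x ≤ 1} := by
    refine ⟨0, ?_, ?_⟩ <;> simp [l2v]
  exact le_csSup (st5_spec_bddAbove B) h0

lemma st5_spec_mulVec_le {k l : Type*} [Fintype k] [Fintype l] (B : Matrix k l ℝ) (x : l → ℝ) :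
    l2v (B.mulVec x) ≤ spec B * l2v x := by
  rcases eq_or_ne (l2v x) 0 with h | h
  · rw [st5_l2v_eq_zero h]
    simp [l2v, mul_zero, Matrix.mulVec_zero]
  · have hpos : 0 < l2v x := lt_of_le_of_ne (st5_l2v_nonneg x) (Ne.symm h)
    set u := (l2v x)⁻¹ • x with hu
    have hlu : l2v u = 1 := by
      rw [hu, st5_l2v_smul, abs_of_pos (by positivity), inv_mul_cancel₀ h]
    have hmem : l2v (B.mulVec u) ∈ (fun x => l2v (B.mulVec x)) '' {x | l2v x ≤ 1} :=
      ⟨u, le_of_eq hlu, rfl⟩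
    have hle : l2v (B.mulVec u) ≤ spec B := le_csSup (st5_spec_bddAbove B) hmem
    have hxu : x = l2v x • u := by
      rw [hu, smul_smul, mul_inv_cancel₀ h, one_smul]
    calc l2v (B.mulVec x) = l2v (B.mulVec (l2v x • u)) := by rw [← hxu]
      _ = l2v x * l2v (B.mulVec u) := by
          rw [Matrix.mulVec_smul, st5_l2v_smul, abs_of_pos hpos]
      _ ≤ l2v x * spec B := mul_le_mul_of_nonneg_left hle (le_of_lt hpos)
      _ = spec B * l2v x := mul_comm _ _


lemma st5_aux_le {s x : ℝ} (hs : 0 ≤ s) (h : ∀ t : ℝ, 0 < t → x ≤ t * s / 2) : x ≤ 0 := by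
  apply le_of_forall_pos_le_add
  intro ε hε
  have ht : 0 < 2 * ε / (s + 1) := by positivity
  have h1 := h _ ht
  have h2 : (2 * ε / (s + 1)) * (s + 1) = 2 * ε := by field_simp
  nlinarith [h1, h2, ht]

lemma st5_quad_part (A : Matrix (Fin n) (Fin m) ℝ) (y : Fin n → ℝ) (b : Fin m → ℝ)
    (j : Fin m) (t : ℝ) :
    ∑ i, (y i - A.mulVec (b + Pi.single j t) i) ^ 2 =
      ∑ i, (y i - A.mulVec b i) ^ 2
        - 2 * t * (∑ i, A i j * (y i - A.mulVec b i)) + t ^ 2 * ∑ i, A i j ^ 2 := by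
  rw [Matrix.mulVec_add, Matrix.mulVec_single]
  rw [show MulOpposite.op t • A.col j = fun i => A i j * t from by ext i; simp]
  have h : ∀ i, (y i - (A.mulVec b + fun i => A i j * t) i) ^ 2 =
      (y i - A.mulVec b i) ^ 2 - 2 * t * (A i j * (y i - A.mulVec b i)) + t ^ 2 * A i j ^ 2 := by
    intro i; simp only [Pi.add_apply]; ring
  simp only [h, Finset.sum_add_distrib, Finset.sum_sub_distrib, ← Finset.mul_sum]

lemma st5_l1c_update_mem (b : Fin m → ℝ) (T : Finset (Fin m)) (j : Fin m) (t : ℝ) (hj : j ∈ T) :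
    l1c (b + Pi.single j t) T = l1c b T := by
  unfold l1c
  apply Finset.sum_congr rfl
  intro k hk
  have hkj : k ≠ j := by rintro rfl; exact (Finset.mem_compl.1 hk) hj
  simp [Pi.single_eq_of_ne hkj]

lemma st5_l1c_update_notmem (b : Fin m → ℝ) (T : Finset (Fin m)) (j : Fin m) (t : ℝ) (hj : j ∉ T) :
    l1c (b + Pi.single j t) T = l1c b T + (|b j + t| - |b j|) := by
  have hjc : j ∈ Tᶜ := Finset.mem_compl.2 hj
  have e1 : ∑ k ∈ Tᶜ, |b k + (Pi.single j t : Fin m → ℝ) k| = |b j + t| + ∑ k ∈ Tᶜ.erase j, |b k| := by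
    rw [← Finset.add_sum_erase _ (fun k => |b k + (Pi.single j t : Fin m → ℝ) k|) hjc]
    congr 1
    · simp [Pi.single_eq_same]
    · exact Finset.sum_congr rfl fun k hk => by
        simp [Pi.single_eq_of_ne (Finset.ne_of_mem_erase hk)]
  have e2 : ∑ k ∈ Tᶜ, |b k| = |b j| + ∑ k ∈ Tᶜ.erase j, |b k| :=
    (Finset.add_sum_erase _ _ hjc).symm
  unfold l1c
  simp only [Pi.add_apply]
  rw [e1, e2]
  ring

lemma st5_kkt (A : Matrix (Fin n) (Fin m) ℝ) (T Δ : Finset (Fin m)) (hdisj : Disjoint T Δ)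
    (γ : ℝ) (hγ : 0 < γ) (y : Fin n → ℝ) (btil : Fin m → ℝ)
    (hmin : IsRestrMin A y γ T (T ∪ Δ) btil) :
    (∀ j ∈ T, ∑ i, A i j * (y i - A.mulVec btil i) = 0) ∧
    (∀ j ∈ Δ, |∑ i, A i j * (y i - A.mulVec btil i)| ≤ γ) := by
  obtain ⟨hsupp, hopt⟩ := hmin
  have key : ∀ j ∈ T ∪ Δ, ∀ t : ℝ,
      objL A y γ T btil ≤ objL A y γ T (btil + Pi.single j t) := by
    intro j hj t
    apply hopt
    intro k hk
    have hb : btil k = 0 := hsupp k hk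
    have hkj : k ≠ j := by rintro rfl; exact hk hj
    simp [Pi.single_eq_of_ne hkj, hb]
  constructor
  · intro j hj
    set r := ∑ i, A i j * (y i - A.mulVec btil i) with hr
    set s := ∑ i, A i j ^ 2 with hs
    have hs0 : 0 ≤ s := by positivity
    have hineq : ∀ t : ℝ, t * r ≤ t ^ 2 / 2 * s := by
      intro t
      have h := key j (Finset.mem_union_left _ hj) t
      rw [objL, objL, st5_quad_part, st5_l1c_update_mem _ _ _ _ hj] at h
      nlinarith [h]
    have hle : r ≤ 0 := by
      apply st5_aux_le hs0
      intro t ht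
      have h := hineq t
      have h2 : t * r ≤ t * (t * s / 2) := by nlinarith [h]
      exact (mul_le_mul_iff_right₀ ht).1 h2
    have hge : -r ≤ 0 := by
      apply st5_aux_le hs0
      intro t ht
      have h := hineq (-t)
      have h2 : t * (-r) ≤ t * (t * s / 2) := by nlinarith [h]
      exact (mul_le_mul_iff_right₀ ht).1 h2
    linarith
  · intro j hj
    have hjT : j ∉ T := fun h => (Finset.disjoint_left.1 hdisj h) hj
    set r := ∑ i, A i j * (y i - A.mulVec btil i) with hr
    set s := ∑ i, A i j ^ 2 with hs
    have hs0 : 0 ≤ s := by positivity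
    have hineq : ∀ t : ℝ, t * r ≤ t ^ 2 / 2 * s + γ * |t| := by
      intro t
      have h := key j (Finset.mem_union_right _ hj) t
      rw [objL, objL, st5_quad_part, st5_l1c_update_notmem _ _ _ _ hjT] at h
      have habs : |btil j + t| - |btil j| ≤ |t| := by
        have := abs_sub_abs_le_abs_sub (btil j + t) (btil j)
        simpa using this
      nlinarith [h, mul_le_mul_of_nonneg_left habs hγ.le]
    rw [abs_le]
    constructor
    · have : -r - γ ≤ 0 := by
        apply st5_aux_le hs0
        intro t ht
        have h := hineq (-t)
        rw [abs_neg, abs_of_pos ht] at h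
        have h2 : t * (-r - γ) ≤ t * (t * s / 2) := by nlinarith [h]
        exact (mul_le_mul_iff_right₀ ht).1 h2
      linarith
    · have : r - γ ≤ 0 := by
        apply st5_aux_le hs0
        intro t ht
        have h := hineq t
        rw [abs_of_pos ht] at h
        have h2 : t * (r - γ) ≤ t * (t * s / 2) := by nlinarith [h]
        exact (mul_le_mul_iff_right₀ ht).1 h2
      linarith


-- (L1) mulVec of supported vector
lemma st5_mulVec_supp (A : Matrix (Fin n) (Fin m) ℝ) (S : Finset (Fin m)) (x : Fin m → ℝ)
    (hx : suppOn x S) : A.mulVec x = (cols A S).mulVec (subv x S) := by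
  funext i
  show ∑ k, A i k * x k = ∑ k : {j // j ∈ S}, A i k.1 * x k.1
  rw [Finset.sum_coe_sort S (fun k => A i k * x k)]
  exact (Finset.sum_subset (Finset.subset_univ S)
    (fun k _ hk => by rw [hx k hk, mul_zero])).symm

lemma st5_mulVec_split (A : Matrix (Fin n) (Fin m) ℝ) (T Δ : Finset (Fin m))
    (hdisj : Disjoint T Δ) (x : Fin m → ℝ) (hx : suppOn x (T ∪ Δ)) :
    A.mulVec x = (cols A T).mulVec (subv x T) + (cols A Δ).mulVec (subv x Δ) := by
  funext i
  show ∑ k, A i k * x k = (∑ k : {j // j ∈ T}, A i k.1 * x k.1)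
    + ∑ k : {j // j ∈ Δ}, A i k.1 * x k.1
  rw [Finset.sum_coe_sort T (fun k => A i k * x k),
    Finset.sum_coe_sort Δ (fun k => A i k * x k), ← Finset.sum_union hdisj]
  exact (Finset.sum_subset (Finset.subset_univ _)
    (fun k _ hk => by rw [hx k hk, mul_zero])).symm

-- (L3) quadratic form of Gram matrix
lemma st5_gram_quad {k : Type*} [Fintype k] (B : Matrix (Fin n) k ℝ) (v : k → ℝ) :
    dotProduct v ((Bᵀ * B).mulVec v) = ∑ i, (B.mulVec v i) ^ 2 := by
  rw [← Matrix.mulVec_mulVec, Matrix.dotProduct_mulVec, Matrix.vecMul_transpose]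
  simp [dotProduct, sq]

-- (L2) injectivity on supported vectors
lemma st5_inj_supp (A : Matrix (Fin n) (Fin m) ℝ) (N : Finset (Fin m))
    (hrank : IsUnit ((cols A N)ᵀ * cols A N)) (x : Fin m → ℝ) (hx : suppOn x N)
    (hAx : A.mulVec x = 0) : x = 0 := by
  have hdet : IsUnit ((cols A N)ᵀ * cols A N).det :=
    (Matrix.isUnit_iff_isUnit_det _).1 hrank
  have h1 : ((cols A N)ᵀ * cols A N).mulVec (subv x N) = 0 := by
    rw [← Matrix.mulVec_mulVec, ← st5_mulVec_supp A N x hx, hAx, Matrix.mulVec_zero]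
  have h2 : subv x N = 0 := by
    have := congrArg (((cols A N)ᵀ * cols A N)⁻¹.mulVec) h1
    rwa [Matrix.mulVec_mulVec, Matrix.nonsing_inv_mul _ hdet, Matrix.one_mulVec,
      Matrix.mulVec_zero] at this
  funext j
  by_cases hj : j ∈ N
  · exact congrFun h2 ⟨j, hj⟩
  · exact hx j hj

-- (L4) invertibility of a sub-Gram matrix (T ⊆ N version)
lemma st5_gram_unit_subset (A : Matrix (Fin n) (Fin m) ℝ) (N S : Finset (Fin m)) (hSN : S ⊆ N)
    (hrank : IsUnit ((cols A N)ᵀ * cols A N)) : IsUnit ((cols A S)ᵀ * cols A S) := by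
  rw [Matrix.isUnit_iff_isUnit_det, isUnit_iff_ne_zero]
  intro hdet
  obtain ⟨v, hv, hPv⟩ := (Matrix.exists_mulVec_eq_zero_iff).2 hdet
  have hquad : ∑ i, ((cols A S).mulVec v i) ^ 2 = 0 := by
    rw [← st5_gram_quad, hPv, dotProduct_zero]
  have hBv : (cols A S).mulVec v = 0 := by
    funext i
    have := (Finset.sum_eq_zero_iff_of_nonneg (fun i _ => by positivity)).1 hquad i (mem_univ i)
    exact pow_eq_zero_iff (two_ne_zero) |>.1 this
  set x : Fin m → ℝ := fun j => if h : j ∈ S then v ⟨j, h⟩ else 0 with hxdef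
  have hxsupp : suppOn x S := fun j hj => by simp [hxdef, hj]
  have hsub : subv x S = v := by funext j; simp [hxdef, subv, j.2]
  have hxN : suppOn x N := fun j hj => hxsupp j (fun h => hj (hSN h))
  have hx0 : x = 0 := by
    apply st5_inj_supp A N hrank x hxN
    rw [st5_mulVec_supp A S x hxsupp, hsub, hBv]
  apply hv
  rw [← hsub, hx0]
  funext j
  simp [subv]

-- M is symmetric
lemma st5_projM_symm (A : Matrix (Fin n) (Fin m) ℝ) (T : Finset (Fin m)) :
    (projM A T)ᵀ = projM A T := by
  unfold projM
  rw [Matrix.transpose_sub, Matrix.transpose_one, Matrix.transpose_mul, Matrix.transpose_mul,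
    Matrix.transpose_transpose, Matrix.transpose_nonsing_inv, Matrix.transpose_mul,
    Matrix.transpose_transpose, Matrix.mul_assoc]

-- M is idempotent (given T-Gram invertible)
lemma st5_projM_idem (A : Matrix (Fin n) (Fin m) ℝ) (T : Finset (Fin m))
    (hP : IsUnit ((cols A T)ᵀ * cols A T)) : projM A T * projM A T = projM A T := by
  have hdet : IsUnit ((cols A T)ᵀ * cols A T).det := (Matrix.isUnit_iff_isUnit_det _).1 hP
  set B := cols A T
  set P := Bᵀ * B with hPdef
  have hPi : (B * P⁻¹ * Bᵀ) * (B * P⁻¹ * Bᵀ) = B * P⁻¹ * Bᵀ := by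
    calc (B * P⁻¹ * Bᵀ) * (B * P⁻¹ * Bᵀ)
        = B * (P⁻¹ * ((Bᵀ * B) * (P⁻¹ * Bᵀ))) := by simp only [Matrix.mul_assoc]
      _ = B * (P⁻¹ * Bᵀ) := by
          rw [← Matrix.mul_assoc (Bᵀ * B), ← hPdef, ← Matrix.mul_assoc P⁻¹,
            Matrix.mul_nonsing_inv _ hdet, Matrix.mul_one]
      _ = B * P⁻¹ * Bᵀ := by rw [Matrix.mul_assoc]
  unfold projM
  rw [Matrix.sub_mul, Matrix.mul_sub, Matrix.mul_sub, Matrix.one_mul, Matrix.mul_one, hPi]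
  simp
  exact sub_self _

-- schur as Gram matrix of M * colsΔ
lemma st5_schur_gram (A : Matrix (Fin n) (Fin m) ℝ) (T Δ : Finset (Fin m))
    (hP : IsUnit ((cols A T)ᵀ * cols A T)) :
    schur A T Δ = (projM A T * cols A Δ)ᵀ * (projM A T * cols A Δ) := by
  rw [Matrix.transpose_mul, Matrix.mul_assoc, ← Matrix.mul_assoc (projM A T)ᵀ,
    st5_projM_symm, st5_projM_idem A T hP, schur, Matrix.mul_assoc]

-- schur = R - Qᵀ P⁻¹ Q
lemma st5_schur_eq (A : Matrix (Fin n) (Fin m) ℝ) (T Δ : Finset (Fin m)) :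
    schur A T Δ = (cols A Δ)ᵀ * cols A Δ -
      ((cols A Δ)ᵀ * cols A T) * (((cols A T)ᵀ * cols A T)⁻¹ * ((cols A T)ᵀ * cols A Δ)) := by
  unfold schur projM
  rw [Matrix.mul_sub, Matrix.mul_one, Matrix.sub_mul]
  simp only [Matrix.mul_assoc]

-- (L6) schur invertible
lemma st5_schur_unit (A : Matrix (Fin n) (Fin m) ℝ) (T Δ : Finset (Fin m))
    (hdisj : Disjoint T Δ) (hrank : IsUnit ((cols A (T ∪ Δ))ᵀ * cols A (T ∪ Δ))) :
    IsUnit (schur A T Δ) := by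
  have hP : IsUnit ((cols A T)ᵀ * cols A T) :=
    st5_gram_unit_subset A (T ∪ Δ) T Finset.subset_union_left hrank
  rw [Matrix.isUnit_iff_isUnit_det, isUnit_iff_ne_zero]
  intro hdet
  obtain ⟨v, hv, hSv⟩ := (Matrix.exists_mulVec_eq_zero_iff).2 hdet
  have hquad : ∑ i, ((projM A T * cols A Δ).mulVec v i) ^ 2 = 0 := by
    rw [← st5_gram_quad, ← st5_schur_gram A T Δ hP, hSv, dotProduct_zero]
  have hMv : (projM A T * cols A Δ).mulVec v = 0 := by
    funext i
    have := (Finset.sum_eq_zero_iff_of_nonneg (fun i _ => by positivity)).1 hquad i (mem_univ i)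
    exact pow_eq_zero_iff (two_ne_zero) |>.1 this
  -- so colsΔ v = colsT * (P⁻¹ colsTᵀ colsΔ) v
  have hproj : (cols A Δ).mulVec v =
      (cols A T).mulVec ((((cols A T)ᵀ * cols A T)⁻¹ * ((cols A T)ᵀ * cols A Δ)).mulVec v) := by
    have h1 := hMv
    unfold projM at h1
    rw [Matrix.sub_mul, Matrix.one_mul, Matrix.sub_mulVec, sub_eq_zero] at h1
    rw [h1]
    simp only [← Matrix.mulVec_mulVec, Matrix.mul_assoc]
  set w : {j // j ∈ T} → ℝ :=
    -((((cols A T)ᵀ * cols A T)⁻¹ * ((cols A T)ᵀ * cols A Δ)).mulVec v) with hwdef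
  set x : Fin m → ℝ := fun j => if h : j ∈ T then w ⟨j, h⟩ else if h : j ∈ Δ then v ⟨j, h⟩ else 0
    with hxdef
  have hxsupp : suppOn x (T ∪ Δ) := by
    intro j hj
    rw [Finset.mem_union] at hj
    push_neg at hj
    simp [hxdef, hj.1, hj.2]
  have hsubT : subv x T = w := by funext j; simp [hxdef, subv, j.2]
  have hsubΔ : subv x Δ = v := by
    funext j
    have hjT : j.1 ∉ T := Finset.disjoint_right.1 hdisj j.2
    simp [hxdef, subv, hjT, j.2]
  have hx0 : x = 0 := by
    apply st5_inj_supp A (T ∪ Δ) hrank x hxsupp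
    rw [st5_mulVec_split A T Δ hdisj x hxsupp, hsubT, hsubΔ, hwdef, Matrix.mulVec_neg, hproj]
    abel
  apply hv
  rw [← hsubΔ, hx0]
  funext j
  simp [subv]


-- block solve
lemma st5_block_solve (A : Matrix (Fin n) (Fin m) ℝ) (T Δ : Finset (Fin m))
    (hdisj : Disjoint T Δ)
    (hrank : IsUnit ((cols A (T ∪ Δ))ᵀ * cols A (T ∪ Δ)))
    (γ : ℝ) (y : Fin n → ℝ) (btil : Fin m → ℝ) (hbsupp : suppOn btil (T ∪ Δ))
    (r : Fin m → ℝ) (hrdef : r = fun j => ∑ i, A i j * (y i - A.mulVec btil i))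
    (hkT : ∀ j ∈ T, r j = 0) :
    subv (lsqFull A (T ∪ Δ) y - btil) Δ = (schur A T Δ)⁻¹.mulVec (subv r Δ) ∧
    subv (lsqFull A (T ∪ Δ) y - btil) T = -((crossMat A T Δ).mulVec (subv r Δ)) := by
  set d : Fin m → ℝ := lsqFull A (T ∪ Δ) y - btil with hddef
  set N := T ∪ Δ with hN
  have hrankdet : IsUnit ((cols A N)ᵀ * cols A N).det :=
    (Matrix.isUnit_iff_isUnit_det _).1 hrank
  have hP : IsUnit ((cols A T)ᵀ * cols A T) :=
    st5_gram_unit_subset A N T Finset.subset_union_left hrank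
  have hPdet : IsUnit ((cols A T)ᵀ * cols A T).det :=
    (Matrix.isUnit_iff_isUnit_det _).1 hP
  have hSdet : IsUnit (schur A T Δ).det :=
    (Matrix.isUnit_iff_isUnit_det _).1 (st5_schur_unit A T Δ hdisj hrank)
  set c := lsqFull A N y with hc
  have hcsupp : suppOn c N := fun j hj => dif_neg hj
  have hcsub : subv c N = lsq A N y := funext fun j => dif_pos j.2
  have hdsupp : suppOn d N := fun j hj => by
    show c j - btil j = 0
    rw [hcsupp j hj, hbsupp j hj, sub_zero]
  -- normal equations
  have hc' : (cols A N)ᵀ.mulVec (A.mulVec c) = (cols A N)ᵀ.mulVec y := by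
    rw [st5_mulVec_supp A N c hcsupp, Matrix.mulVec_mulVec, hcsub, lsq, Matrix.mulVec_mulVec,
      Matrix.mul_nonsing_inv _ hrankdet, Matrix.one_mulVec]
  -- coordinate equations
  have hco : ∀ j, j ∈ N → ∑ i, A i j * A.mulVec d i = r j := by
    intro j hj
    have h1 : ∑ i, A i j * (A.mulVec c) i = ∑ i, A i j * y i := congrFun hc' ⟨j, hj⟩
    have hd : A.mulVec d = fun i => A.mulVec c i - A.mulVec btil i := by
      rw [show d = c - btil from rfl, Matrix.mulVec_sub]
      rfl
    simp only [hrdef, hd, mul_sub, Finset.sum_sub_distrib, h1]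
  set dT := subv d T
  set dΔ := subv d Δ
  set rΔ := subv r Δ with hrΔ
  have hsplit : A.mulVec d = (cols A T).mulVec dT + (cols A Δ).mulVec dΔ :=
    st5_mulVec_split A T Δ hdisj d hdsupp
  have heqT : ((cols A T)ᵀ * cols A T).mulVec dT + ((cols A T)ᵀ * cols A Δ).mulVec dΔ = 0 := by
    have e : ((cols A T)ᵀ * cols A T).mulVec dT + ((cols A T)ᵀ * cols A Δ).mulVec dΔ
        = (cols A T)ᵀ.mulVec (A.mulVec d) := by
      rw [hsplit, Matrix.mulVec_add, Matrix.mulVec_mulVec, Matrix.mulVec_mulVec]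
    rw [e]
    funext j
    have h := hco j.1 (Finset.mem_union_left _ j.2)
    rw [hkT j.1 j.2] at h
    simpa [Matrix.mulVec, dotProduct, Matrix.transpose_apply, cols] using h
  have heqΔ : ((cols A Δ)ᵀ * cols A T).mulVec dT + ((cols A Δ)ᵀ * cols A Δ).mulVec dΔ = rΔ := by
    have e : ((cols A Δ)ᵀ * cols A T).mulVec dT + ((cols A Δ)ᵀ * cols A Δ).mulVec dΔ
        = (cols A Δ)ᵀ.mulVec (A.mulVec d) := by
      rw [hsplit, Matrix.mulVec_add, Matrix.mulVec_mulVec, Matrix.mulVec_mulVec]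
    rw [e]
    funext j
    have h := hco j.1 (Finset.mem_union_right _ j.2)
    simpa [Matrix.mulVec, dotProduct, Matrix.transpose_apply, cols, subv, hrΔ] using h
  have hdT : dT = -(((((cols A T)ᵀ * cols A T)⁻¹ * ((cols A T)ᵀ * cols A Δ))).mulVec dΔ) := by
    have h1 : ((cols A T)ᵀ * cols A T).mulVec dT = -(((cols A T)ᵀ * cols A Δ).mulVec dΔ) :=
      eq_neg_of_add_eq_zero_left heqT
    calc dT = (((cols A T)ᵀ * cols A T)⁻¹ * ((cols A T)ᵀ * cols A T)).mulVec dT := by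
          rw [Matrix.nonsing_inv_mul _ hPdet, Matrix.one_mulVec]
      _ = ((cols A T)ᵀ * cols A T)⁻¹.mulVec (((cols A T)ᵀ * cols A T).mulVec dT) := by
          rw [Matrix.mulVec_mulVec]
      _ = ((cols A T)ᵀ * cols A T)⁻¹.mulVec (-(((cols A T)ᵀ * cols A Δ).mulVec dΔ)) := by
          rw [h1]
      _ = -(((((cols A T)ᵀ * cols A T)⁻¹ * ((cols A T)ᵀ * cols A Δ))).mulVec dΔ) := by
          rw [Matrix.mulVec_neg, Matrix.mulVec_mulVec]
  have hschur : (schur A T Δ).mulVec dΔ = rΔ := by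
    rw [st5_schur_eq, Matrix.sub_mulVec,
      ← Matrix.mulVec_mulVec dΔ ((cols A Δ)ᵀ * cols A T)
        (((cols A T)ᵀ * cols A T)⁻¹ * ((cols A T)ᵀ * cols A Δ)),
      show ((((cols A T)ᵀ * cols A T)⁻¹ * ((cols A T)ᵀ * cols A Δ))).mulVec dΔ = -dT from by
        rw [hdT, neg_neg],
      Matrix.mulVec_neg, sub_neg_eq_add, add_comm]
    exact heqΔ
  have hdΔfin : dΔ = (schur A T Δ)⁻¹.mulVec rΔ := by
    rw [← hschur, Matrix.mulVec_mulVec, Matrix.nonsing_inv_mul _ hSdet, Matrix.one_mulVec]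
  have hdTfin : dT = -((crossMat A T Δ).mulVec rΔ) := by
    rw [hdT, hdΔfin, Matrix.mulVec_mulVec]
    rfl
  exact ⟨hdΔfin, hdTfin⟩


/-- ℓ² bound on the error between the restricted minimizer and the
least-squares estimate. -/
theorem stmt5 (n m : ℕ) (A : Matrix (Fin n) (Fin m) ℝ) (T Δ : Finset (Fin m))
    (hdisj : Disjoint T Δ)
    (hrank : IsUnit ((cols A (T ∪ Δ))ᵀ * cols A (T ∪ Δ)))
    (γ : ℝ) (hγ : 0 < γ) (y : Fin n → ℝ) (btil : Fin m → ℝ)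
    (hmin : IsRestrMin A y γ T (T ∪ Δ) btil) :
    l2v (btil - lsqFull A (T ∪ Δ) y) ≤
      γ * Real.sqrt (Δ.card) *
        Real.sqrt (spec (crossMat A T Δ) ^ 2 + spec ((schur A T Δ)⁻¹) ^ 2) := by
  set N := T ∪ Δ with hN
  set r : Fin m → ℝ := fun j => ∑ i, A i j * (y i - A.mulVec btil i) with hrdef
  obtain ⟨hkT, hkΔ⟩ := st5_kkt A T Δ hdisj γ hγ y btil hmin
  obtain ⟨hΔeq, hTeq⟩ := st5_block_solve A T Δ hdisj hrank γ y btil hmin.1 r hrdef hkT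
  set d : Fin m → ℝ := lsqFull A N y - btil with hddef
  set c := lsqFull A N y with hc
  have hcsupp : suppOn c N := fun j hj => dif_neg hj
  have hdsupp : suppOn d N := fun j hj => by
    show c j - btil j = 0
    rw [hcsupp j hj, hmin.1 j hj, sub_zero]
  set rΔ := subv r Δ with hrΔ
  set σ₁ := spec (crossMat A T Δ) with hσ₁
  set σ₂ := spec ((schur A T Δ)⁻¹) with hσ₂
  set K := γ * Real.sqrt (Δ.card) with hK
  have hK0 : 0 ≤ K := by positivity
  -- rewrite goal in terms of d
  rw [show btil - lsqFull A N y = -d from by rw [hddef, neg_sub]]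
  rw [st5_l2v_neg]
  -- split squared norm
  have hsum : ∑ j, d j ^ 2 =
      (∑ j : {x // x ∈ T}, d j.1 ^ 2) + ∑ j : {x // x ∈ Δ}, d j.1 ^ 2 := by
    rw [Finset.sum_coe_sort T (fun j => d j ^ 2), Finset.sum_coe_sort Δ (fun j => d j ^ 2),
      ← Finset.sum_union hdisj]
    exact (Finset.sum_subset (Finset.subset_univ _)
      (fun j _ hj => by simp [hdsupp j hj])).symm
  have hsq : l2v d ^ 2 = l2v (subv d T) ^ 2 + l2v (subv d Δ) ^ 2 := by
    simp only [st5_l2v_sq, subv]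
    exact hsum
  -- norm bounds
  have hbT : l2v (subv d T) ≤ σ₁ * l2v rΔ := by
    rw [hTeq, st5_l2v_neg]
    exact st5_spec_mulVec_le _ _
  have hbΔ : l2v (subv d Δ) ≤ σ₂ * l2v rΔ := by
    rw [hΔeq]
    exact st5_spec_mulVec_le _ _
  have hrb : l2v rΔ ≤ K := by
    have hsb : ∑ j : {x // x ∈ Δ}, (subv r Δ j) ^ 2 ≤ (Δ.card : ℝ) * γ ^ 2 := by
      calc ∑ j : {x // x ∈ Δ}, (subv r Δ j) ^ 2
          ≤ ∑ _j : {x // x ∈ Δ}, γ ^ 2 := by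
            apply Finset.sum_le_sum
            intro j _
            have h := abs_le.1 (hkΔ j.1 j.2)
            have : subv r Δ j = r j.1 := rfl
            nlinarith [h.1, h.2]
        _ = (Δ.card : ℝ) * γ ^ 2 := by
            rw [Finset.sum_const, Finset.card_univ, Fintype.card_coe, nsmul_eq_mul]
    calc l2v rΔ ≤ Real.sqrt ((Δ.card : ℝ) * γ ^ 2) := Real.sqrt_le_sqrt hsb
      _ = K := by
          rw [Real.sqrt_mul (by positivity), Real.sqrt_sq hγ.le, mul_comm]
  have h1 : l2v (subv d T) ≤ σ₁ * K :=
    hbT.trans (mul_le_mul_of_nonneg_left hrb (st5_spec_nonneg _))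
  have h2 : l2v (subv d Δ) ≤ σ₂ * K :=
    hbΔ.trans (mul_le_mul_of_nonneg_left hrb (st5_spec_nonneg _))
  have hgoal : l2v d = Real.sqrt (l2v (subv d T) ^ 2 + l2v (subv d Δ) ^ 2) := by
    rw [← hsq, Real.sqrt_sq (st5_l2v_nonneg d)]
  rw [hgoal, show K * Real.sqrt (σ₁ ^ 2 + σ₂ ^ 2) = Real.sqrt (K ^ 2 * (σ₁ ^ 2 + σ₂ ^ 2)) from by
    rw [Real.sqrt_mul (sq_nonneg K), Real.sqrt_sq hK0]]
  apply Real.sqrt_le_sqrt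
  have ha2 : l2v (subv d T) ^ 2 ≤ σ₁ ^ 2 * K ^ 2 := by
    nlinarith [st5_l2v_nonneg (subv d T), h1]
  have hb2 : l2v (subv d Δ) ^ 2 ≤ σ₂ ^ 2 * K ^ 2 := by
    nlinarith [st5_l2v_nonneg (subv d Δ), h2]
  nlinarith [ha2, hb2]
end
end
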